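/- arXiv:0704.3286 — 2 statements merged into one kernel-verified Lean document; each statement's English description precedes it below -/
import Mathlib

section
/- The free colored Milnor group CMF is nilpotent; that is, for any finite index type ι and any r : ι → ℕ, the quotient F/X of the free group F on the generating set Σ_{i : ι} Fin (r i) by the subgroup X is a nilpotent group. -/
open scoped commutatorElement

section aux
variable {G : Type*} [Group G]

lemma my_normal_iSup {κ : Sort*} (H : κ → Subgroup G) (h : ∀ i, (H i).Normal) :
    (⨆ i, H i).Normal := by
  constructor
  intro n hn g
  refine Subgroup.iSup_induction H (C := fun x => g * x * g⁻¹ ∈ ⨆ i, H i) hn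
    (fun i x hx => ?_) (by simpa using one_mem _) (fun x y hx hy => ?_)
  · exact Subgroup.mem_iSup_of_mem i ((h i).conj_mem x hx g)
  · show g * (x * y) * g⁻¹ ∈ ⨆ i, H i
    have : g * (x * y) * g⁻¹ = (g * x * g⁻¹) * (g * y * g⁻¹) := by group
    rw [this]; exact mul_mem hx hy

lemma my_commutator_iSup_le {κ : Sort*} (H : κ → Subgroup G) (K : Subgroup G)
    (hH : ∀ i, (H i).Normal) (hK : K.Normal) :
    ⁅⨆ i, H i, K⁆ ≤ ⨆ i, ⁅H i, K⁆ := by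
  have hN : ∀ i, (⁅H i, K⁆).Normal := fun i => by
    have := hH i; exact Subgroup.commutator_normal (H i) K
  have hM : (⨆ i, ⁅H i, K⁆).Normal := my_normal_iSup _ hN
  rw [Subgroup.commutator_le]
  intro g hg k hk
  refine Subgroup.iSup_induction H (C := fun x => ⁅x, k⁆ ∈ ⨆ i, ⁅H i, K⁆) hg
    (fun i x hx => ?_) (by simpa using one_mem _) (fun x y hx hy => ?_)
  · exact Subgroup.mem_iSup_of_mem i (Subgroup.commutator_mem_commutator hx hk)
  · show ⁅x * y, k⁆ ∈ ⨆ i, ⁅H i, K⁆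
    have : ⁅x * y, k⁆ = (x * ⁅y, k⁆ * x⁻¹) * ⁅x, k⁆ := by
      simp only [commutatorElement_def]; group
    rw [this]
    exact mul_mem (hM.conj_mem _ hy x) hx

end aux

section fitting
variable {G : Type*} [Group G] {ι : Type*}

private def Dd (N : ι → Subgroup G) (S : Finset ι) : Subgroup G := ⨅ i ∈ S, N i

private lemma Dd_le {N : ι → Subgroup G} {S : Finset ι} {i : ι} (hi : i ∈ S) :
    Dd N S ≤ N i := fun x hx => by
  simp only [Dd, Subgroup.mem_iInf] at hx; exact hx i hi

private lemma Dd_normal (N : ι → Subgroup G) (hnorm : ∀ i, (N i).Normal) (S : Finset ι) :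
    (Dd N S).Normal := by
  constructor
  intro n hn g
  simp only [Dd, Subgroup.mem_iInf] at hn ⊢
  exact fun i hi => (hnorm i).conj_mem _ (hn i hi) g

private def Mm (N : ι → Subgroup G) (n : ℕ) : Subgroup G :=
  ⨆ S : {S : Finset ι // S.card = n + 1}, Dd N S.1

lemma my_fitting [Fintype ι] (N : ι → Subgroup G)
    (hnorm : ∀ i, (N i).Normal) (habel : ∀ i, ⁅N i, N i⁆ = ⊥)
    (htop : ⨆ i, N i = ⊤) : Group.IsNilpotent G := by
  classical
  have hMnorm : ∀ n, (Mm N n).Normal := fun n => my_normal_iSup _ (fun S => Dd_normal N hnorm S.1)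
  have key : ∀ n, (⊤ : Subgroup G).lowerCentralSeries n ≤ Mm N n := by
    intro n
    induction n with
    | zero =>
      rw [Subgroup.lowerCentralSeries_zero, ← htop]
      refine iSup_le fun i => ?_
      have h1 : N i ≤ Dd N {i} := by
        intro x hx
        simp only [Dd, Subgroup.mem_iInf, Finset.mem_singleton]
        rintro j rfl
        exact hx
      exact h1.trans (le_iSup (fun S : {S : Finset ι // S.card = 0 + 1} => Dd N S.1)
        ⟨{i}, by simp⟩)
    | succ n ih =>
      rw [Subgroup.lowerCentralSeries_succ]
      have step1 : ⁅(⊤ : Subgroup G).lowerCentralSeries n, ⊤⁆ ≤ ⁅Mm N n, ⊤⁆ :=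
        Subgroup.commutator_mono ih le_rfl
      have step2 : ⁅Mm N n, ⊤⁆ ≤ ⨆ i, ⁅Mm N n, N i⁆ := by
        rw [Subgroup.commutator_comm, ← htop]
        refine (my_commutator_iSup_le N (Mm N n) hnorm (hMnorm n)).trans ?_
        exact iSup_mono fun i => le_of_eq (Subgroup.commutator_comm _ _)
      have step3 : ∀ i, ⁅Mm N n, N i⁆ ≤ Mm N (n + 1) := by
        intro i
        refine (my_commutator_iSup_le (fun S : {S : Finset ι // S.card = n + 1} => Dd N S.1)
          (N i) (fun S => Dd_normal N hnorm S.1) (hnorm i)).trans ?_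
        refine iSup_le fun S => ?_
        by_cases hi : i ∈ S.1
        · have h0 : ⁅Dd N S.1, N i⁆ ≤ ⁅N i, N i⁆ :=
            Subgroup.commutator_mono (Dd_le hi) le_rfl
          rw [habel i] at h0
          exact h0.trans bot_le
        · haveI := Dd_normal N hnorm S.1
          haveI := hnorm i
          have h1 : ⁅Dd N S.1, N i⁆ ≤ Dd N S.1 ⊓ N i := Subgroup.commutator_le_inf _ _
          have h2 : Dd N S.1 ⊓ N i ≤ Dd N (insert i S.1) := by
            intro x hx
            have hx1 : x ∈ Dd N S.1 := hx.1
            have hx2 : x ∈ N i := hx.2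
            simp only [Dd, Subgroup.mem_iInf, Finset.mem_insert] at hx1 ⊢
            rintro j (rfl | hj)
            · exact hx2
            · exact hx1 j hj
          have h3 : (insert i S.1).card = n + 1 + 1 := by
            rw [Finset.card_insert_of_notMem hi, S.2]
          exact h1.trans (h2.trans (le_iSup
            (fun T : {T : Finset ι // T.card = n + 1 + 1} => Dd N T.1) ⟨insert i S.1, h3⟩))
      exact step1.trans (step2.trans (iSup_le step3))
  have hempty : IsEmpty {S : Finset ι // S.card = Fintype.card ι + 1} := by
    constructor
    rintro ⟨S, hS⟩
    have := Finset.card_le_univ S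
    omega
  have hbot : Mm N (Fintype.card ι) = ⊥ := iSup_of_empty _
  exact Subgroup.nilpotent_iff_lowerCentralSeries.mpr
    ⟨Fintype.card ι, le_bot_iff.mp (hbot ▸ key _)⟩

end fitting



open scoped commutatorElement in
/-- The Milnor relations: the normal closure in the free group on generators
`x_{ij}` (indexed by `(i, j) : Σ i : ι, Fin (r i)`, where `i` is the color) of all
commutators of two conjugates of generators of the same color. -/
def milnorRels (ι : Type*) (r : ι → ℕ) : Subgroup (FreeGroup (Σ i : ι, Fin (r i))) :=
  Subgroup.normalClosure
    {w | ∃ (i : ι) (j k : Fin (r i)) (g₁ g₂ : FreeGroup (Σ i : ι, Fin (r i))),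
      w = ⁅g₁ * FreeGroup.of ⟨i, j⟩ * g₁⁻¹, g₂ * FreeGroup.of ⟨i, k⟩ * g₂⁻¹⁆}

instance (ι : Type*) (r : ι → ℕ) : (milnorRels ι r).Normal :=
  Subgroup.normalClosure_normal

/-- The free colored Milnor group `CMF = F/X`. -/
abbrev CMF (ι : Type*) (r : ι → ℕ) : Type _ :=
  FreeGroup (Σ i : ι, Fin (r i)) ⧸ milnorRels ι r

/-- The class of the generator `x_{ij}` in `CMF`. -/
def xg (ι : Type*) (r : ι → ℕ) (i : ι) (j : Fin (r i)) : CMF ι r :=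
  QuotientGroup.mk (FreeGroup.of ⟨i, j⟩)

section cmf
variable (ι : Type*) (r : ι → ℕ)

/-- Conjugates of same-color generators commute in `CMF`. -/
lemma cmf_key (i : ι) (j k : Fin (r i)) (a b : CMF ι r) :
    ⁅a * xg ι r i j * a⁻¹, b * xg ι r i k * b⁻¹⁆ = 1 := by
  obtain ⟨g₁, rfl⟩ := QuotientGroup.mk_surjective a
  obtain ⟨g₂, rfl⟩ := QuotientGroup.mk_surjective b
  have h : ((⁅g₁ * FreeGroup.of ⟨i, j⟩ * g₁⁻¹, g₂ * FreeGroup.of ⟨i, k⟩ * g₂⁻¹⁆ :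
      FreeGroup (Σ i : ι, Fin (r i))) : CMF ι r) = 1 := by
    rw [QuotientGroup.eq_one_iff]
    exact Subgroup.subset_normalClosure ⟨i, j, k, g₁, g₂, rfl⟩
  simpa only [commutatorElement_def, QuotientGroup.mk_mul, QuotientGroup.mk_inv, xg] using h

/-- The normal closure of the color-`i` generators in `CMF`. -/
def cmfN (i : ι) : Subgroup (CMF ι r) :=
  Subgroup.normalClosure (Set.range fun j : Fin (r i) => xg ι r i j)

lemma cmf_conj_commute (i : ι) {x y : CMF ι r}
    (hx : x ∈ Group.conjugatesOfSet (Set.range fun j : Fin (r i) => xg ι r i j))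
    (hy : y ∈ Group.conjugatesOfSet (Set.range fun j : Fin (r i) => xg ι r i j)) :
    Commute x y := by
  rw [Group.mem_conjugatesOfSet_iff] at hx hy
  obtain ⟨u, ⟨j, rfl⟩, hcx⟩ := hx
  obtain ⟨v, ⟨k, rfl⟩, hcy⟩ := hy
  obtain ⟨c, rfl⟩ := isConj_iff.mp hcx
  obtain ⟨d, rfl⟩ := isConj_iff.mp hcy
  exact commutatorElement_eq_one_iff_commute.mp (cmf_key ι r i j k c d)

lemma cmfN_abelian (i : ι) : ⁅cmfN ι r i, cmfN ι r i⁆ = ⊥ := by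
  rw [Subgroup.commutator_eq_bot_iff_le_centralizer]
  intro m hm
  rw [Subgroup.mem_centralizer_iff]
  intro n hn
  suffices h : Commute n m by exact h.eq
  have hm' : ∀ x ∈ Group.conjugatesOfSet (Set.range fun j : Fin (r i) => xg ι r i j),
      Commute x m := by
    intro x hx
    refine Subgroup.closure_induction (fun y hy => cmf_conj_commute ι r i hx hy)
      (Commute.one_right x) (fun y z _ _ hy hz => hy.mul_right hz)
      (fun y _ hy => hy.inv_right) hm
  refine Subgroup.closure_induction (fun y hy => hm' y hy) (Commute.one_left m)
    (fun y z _ _ hy hz => hy.mul_left hz) (fun y _ hy => hy.inv_left) hn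

lemma cmfN_top : ⨆ i, cmfN ι r i = ⊤ := by
  rw [eq_top_iff]
  have h1 : (⊤ : Subgroup (CMF ι r)) =
      Subgroup.map (QuotientGroup.mk' (milnorRels ι r)) ⊤ := by
    rw [Subgroup.map_top_of_surjective _ (QuotientGroup.mk'_surjective _)]
  rw [h1, ← FreeGroup.closure_range_of (Σ i : ι, Fin (r i)), MonoidHom.map_closure]
  rw [Subgroup.closure_le]
  rintro x ⟨y, ⟨⟨i, j⟩, rfl⟩, rfl⟩
  exact Subgroup.mem_iSup_of_mem i (Subgroup.subset_normalClosure ⟨j, rfl⟩)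

end cmf

/-- the free colored Milnor group is nilpotent. -/
theorem cmf_isNilpotent (ι : Type*) [Fintype ι] (r : ι → ℕ) :
    Group.IsNilpotent (CMF ι r) := by
  exact my_fitting (cmfN ι r) (fun i => Subgroup.normalClosure_normal)
    (cmfN_abelian ι r) (cmfN_top ι r)
end

section
/- In the free Milnor group on three generators, the triple commutator of the three generators is nontrivial: let F be the free group on generators x₁, x₂, x₃, and let X be the normal closure in F of all commutators [g₁ x_i g₁⁻¹, g₂ x_i g₂⁻¹] for i ∈ {1,2,3} and g₁, g₂ ∈ F. Then the image of [x₁, [x₂, x₃]] in the quotient group MF := F/X is not the identity element. -/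
open scoped commutatorElement

/-! Auxiliary finite model: the unitriangular 4×4 matrices over 𝔽₂, encoded by
their six above-diagonal entries.  In this group the normal closure of each of
the three "generator" matrices is abelian, yet the triple commutator of the
generators is nontrivial. -/

structure UT3 : Type where
  a : ZMod 2
  b : ZMod 2
  c : ZMod 2
  d : ZMod 2
  e : ZMod 2
  f : ZMod 2

instance : Mul UT3 :=
  ⟨fun x y => ⟨x.a + y.a, x.b + y.b + x.a * y.d, x.c + y.c + x.a * y.e + x.b * y.f,
    x.d + y.d, x.e + y.e + x.d * y.f, x.f + y.f⟩⟩

instance : One UT3 := ⟨⟨0, 0, 0, 0, 0, 0⟩⟩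

instance : Inv UT3 :=
  ⟨fun x => ⟨-x.a, -x.b + x.a * x.d, -x.c + x.a * x.e + x.b * x.f - x.a * x.d * x.f,
    -x.d, -x.e + x.d * x.f, -x.f⟩⟩

lemma UT3.mul_def (a b c d e f a' b' c' d' e' f' : ZMod 2) :
    (UT3.mk a b c d e f) * (UT3.mk a' b' c' d' e' f') =
      UT3.mk (a + a') (b + b' + a * d') (c + c' + a * e' + b * f') (d + d')
        (e + e' + d * f') (f + f') := rfl

lemma UT3.inv_def (a b c d e f : ZMod 2) :
    (UT3.mk a b c d e f)⁻¹ =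
      UT3.mk (-a) (-b + a * d) (-c + a * e + b * f - a * d * f) (-d) (-e + d * f) (-f) := rfl

lemma UT3.one_def : (1 : UT3) = UT3.mk 0 0 0 0 0 0 := rfl

instance : Group UT3 where
  mul_assoc := by
    rintro ⟨a, b, c, d, e, f⟩ ⟨a', b', c', d', e', f'⟩ ⟨a'', b'', c'', d'', e'', f''⟩
    simp only [UT3.mul_def, UT3.mk.injEq]
    refine ⟨by ring, by ring, by ring, by ring, by ring, by ring⟩
  one_mul := by
    rintro ⟨a, b, c, d, e, f⟩
    simp only [UT3.one_def, UT3.mul_def, UT3.mk.injEq]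
    refine ⟨by ring, by ring, by ring, by ring, by ring, by ring⟩
  mul_one := by
    rintro ⟨a, b, c, d, e, f⟩
    simp only [UT3.one_def, UT3.mul_def, UT3.mk.injEq]
    refine ⟨by ring, by ring, by ring, by ring, by ring, by ring⟩
  inv_mul_cancel := by
    rintro ⟨a, b, c, d, e, f⟩
    simp only [UT3.inv_def, UT3.mul_def, UT3.one_def, UT3.mk.injEq]
    refine ⟨by ring, by ring, by ring, by ring, by ring, by ring⟩

def ut3gen : Fin 3 → UT3
  | 0 => ⟨1, 0, 0, 0, 0, 0⟩
  | 1 => ⟨0, 0, 0, 1, 0, 0⟩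
  | 2 => ⟨0, 0, 0, 0, 0, 1⟩

/-- In `UT3`, any two conjugates of the same generator commute. -/
lemma ut3_milnor : ∀ (i : Fin 3) (u v : UT3),
    ⁅u * ut3gen i * u⁻¹, v * ut3gen i * v⁻¹⁆ = 1 := by
  intro i u v
  obtain ⟨a, b, c, d, e, f⟩ := u
  obtain ⟨a', b', c', d', e', f'⟩ := v
  fin_cases i <;>
  · simp only [ut3gen, commutatorElement_def, UT3.mul_def, UT3.inv_def, UT3.one_def,
      UT3.mk.injEq]
    refine ⟨by ring, by ring, by ring, by ring, by ring, by ring⟩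

/-- In `UT3`, the triple commutator of the generators is nontrivial. -/
lemma ut3_triple : ⁅ut3gen 0, ⁅ut3gen 1, ut3gen 2⁆⁆ ≠ 1 := by
  intro h
  rw [show ut3gen 0 = UT3.mk 1 0 0 0 0 0 from rfl, show ut3gen 1 = UT3.mk 0 0 0 1 0 0 from rfl,
    show ut3gen 2 = UT3.mk 0 0 0 0 0 1 from rfl, commutatorElement_def, commutatorElement_def,
    UT3.one_def] at h
  simp only [UT3.mul_def, UT3.inv_def, UT3.mk.injEq] at h
  norm_num at h

/-- The Milnor relations in the free group on three generators `x₁, x₂, x₃`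
(indexed by `Fin 3`): the normal closure of all commutators of two conjugates
of the same generator. -/
def milnorRels3 : Subgroup (FreeGroup (Fin 3)) :=
  Subgroup.normalClosure
    {w | ∃ (i : Fin 3) (g₁ g₂ : FreeGroup (Fin 3)),
      w = ⁅g₁ * FreeGroup.of i * g₁⁻¹, g₂ * FreeGroup.of i * g₂⁻¹⁆}

instance : milnorRels3.Normal := Subgroup.normalClosure_normal

/-- The free Milnor group on three generators `MF = F/X`. -/
abbrev MF3 : Type := FreeGroup (Fin 3) ⧸ milnorRels3

/-- The homomorphism from the free group to the finite model. -/
def ut3hom : FreeGroup (Fin 3) →* UT3 := FreeGroup.lift ut3gen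

lemma milnorRels3_le_ker : milnorRels3 ≤ ut3hom.ker := by
  apply Subgroup.normalClosure_le_normal
  rintro w ⟨i, g₁, g₂, rfl⟩
  simp only [SetLike.mem_coe, MonoidHom.mem_ker, map_commutatorElement, map_mul, map_inv,
    ut3hom, FreeGroup.lift_apply_of]
  exact ut3_milnor i (FreeGroup.lift ut3gen g₁) (FreeGroup.lift ut3gen g₂)

/-- in the free Milnor group on three generators, the triple commutator
`[x₁, [x₂, x₃]]` is nontrivial. -/
theorem triple_commutator_ne_one :
    (QuotientGroup.mk ⁅FreeGroup.of (0 : Fin 3), ⁅FreeGroup.of (1 : Fin 3), FreeGroup.of (2 : Fin 3)⁆⁆ : MF3) ≠ 1 := by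
  intro h
  rw [QuotientGroup.eq_one_iff] at h
  have h2 := milnorRels3_le_ker h
  rw [MonoidHom.mem_ker] at h2
  simp only [map_commutatorElement, ut3hom, FreeGroup.lift_apply_of] at h2
  exact ut3_triple h2
end
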